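/- Let Y be a topological vector space, A a closed proper subset of Y, and k ∈ -0⁺A \ {0}. Define φ_{A,k}(y) = inf{t ∈ ℝ : y ∈ tk + A}. Then for every t ∈ ℝ, the sublevel set {y : φ_{A,k}(y) ≤ t} equals tk + A. -/

import Mathlib

open Set Pointwise

noncomputable def phiF {Y : Type*} [AddCommGroup Y] [Module ℝ Y] (A : Set Y) (k : Y) (y : Y) : EReal :=
  sInf ((fun t : ℝ => (t : EReal)) '' {t : ℝ | y - t • k ∈ A})

def recCone {Y : Type*} [AddCommGroup Y] [Module ℝ Y] (A : Set Y) : Set Y :=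
  {u | ∀ a ∈ A, ∀ t : ℝ, 0 ≤ t → a + t • u ∈ A}

def algInterior {Y : Type*} [AddCommGroup Y] [Module ℝ Y] (C : Set Y) : Set Y :=
  {x ∈ C | ∀ y : Y, ∃ ε : ℝ, 0 < ε ∧ ∀ t : ℝ, 0 ≤ t → t ≤ ε → x + t • y ∈ C}

theorem stmt_1 {Y : Type*} [AddCommGroup Y] [Module ℝ Y] [TopologicalSpace Y]
    [IsTopologicalAddGroup Y] [ContinuousSMul ℝ Y]
    (A : Set Y) (hAc : IsClosed A) (hAne : A.Nonempty) (hAp : A ≠ Set.univ)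
    (k : Y) (hk : k ≠ 0) (hrec : ∀ a ∈ A, ∀ t : ℝ, 0 ≤ t → a - t • k ∈ A) :
    ∀ t : ℝ, {y | phiF A k y ≤ (t : EReal)} = {y | y - t • k ∈ A} := by
  intro t
  ext y
  simp only [mem_setOf_eq]
  have hup : ∀ s s' : ℝ, s ≤ s' → y - s • k ∈ A → y - s' • k ∈ A := by
    intro s s' hss hs
    have h2 := hrec _ hs (s' - s) (by linarith)
    have h3 : y - s • k - (s' - s) • k = y - s' • k := by
      rw [sub_smul]; abel
    rwa [h3] at h2
  constructor
  · intro h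
    have key : ∀ ε : ℝ, 0 < ε → y - (t + ε) • k ∈ A := by
      intro ε hε
      have h2 : phiF A k y < ((t + ε : ℝ) : EReal) :=
        lt_of_le_of_lt h (by exact_mod_cast lt_add_of_pos_right t hε)
      rw [phiF, sInf_lt_iff] at h2
      obtain ⟨x, hx, hxt⟩ := h2
      obtain ⟨s, hs, rfl⟩ := hx
      have hst : s ≤ t + ε := le_of_lt (by simp only [] at hxt; exact_mod_cast hxt)
      exact hup s (t + ε) hst hs
    have htend : Filter.Tendsto (fun n : ℕ => y - (t + 1 / (n + 1)) • k)
        Filter.atTop (nhds (y - t • k)) := by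
      have h0 : Filter.Tendsto (fun n : ℕ => (1 / (n + 1) : ℝ)) Filter.atTop (nhds 0) :=
        tendsto_one_div_add_atTop_nhds_zero_nat
      have : Filter.Tendsto (fun n : ℕ => y - (t + 1 / (n + 1)) • k)
          Filter.atTop (nhds (y - (t + 0) • k)) := by
        exact (tendsto_const_nhds.sub (((tendsto_const_nhds.add h0)).smul tendsto_const_nhds))
      simpa using this
    exact hAc.mem_of_tendsto htend (Filter.Eventually.of_forall fun n =>
      key _ (by positivity))
  · intro h
    exact sInf_le (mem_image_of_mem _ h)
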